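/- Let Ω ⊂ ℝ^d be a compact set with Lebesgue measure |Ω| > 0, and for each N let X_N = (x_1^{(N)},…,x_N^{(N)}) be an N-tuple of points of Ω such that the sequence (X_N) is asymptotically uniformly distributed in Ω. Let κ_A, κ_B : Ω × Ω → ℝ be continuous and define κ_C(x,y) := ∫_Ω κ_A(x,z) κ_B(z,y) dz. Then the discrete convolutions converge uniformly to κ_C, i.e., sup_{(x,y) ∈ Ω×Ω} | κ_C(x,y) − (|Ω|/N) Σ_{k=1}^N κ_A(x, x_k^{(N)}) κ_B(x_k^{(N)}, y) | → 0 as N → ∞. -/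

import Mathlib

open MeasureTheory Filter

private lemma mul_sub_mul_bound {a b a' b' M η : ℝ} (hM : 0 ≤ M)
    (ha : |a| ≤ M) (hb : |b| ≤ M) (ha' : |a'| ≤ M) (hb' : |b'| ≤ M)
    (hA : |a - a'| ≤ η) (hB : |b - b'| ≤ η) :
    |a * b - a' * b'| ≤ 2 * M * η := by
  have : a * b - a' * b' = (a - a') * b + a' * (b - b') := by ring
  rw [this]
  calc |(a - a') * b + a' * (b - b')| ≤ |(a - a') * b| + |a' * (b - b')| := abs_add_le _ _
    _ = |a - a'| * |b| + |a'| * |b - b'| := by rw [abs_mul, abs_mul]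
    _ ≤ η * M + M * η := by
        gcongr <;> first | exact (abs_nonneg _).trans hA | exact (abs_nonneg _).trans hb'
    _ = 2 * M * η := by ring

theorem stmt_1 {d : ℕ} (Ω : Set (EuclideanSpace ℝ (Fin d)))
    (hΩc : IsCompact Ω) (hΩpos : 0 < (volume Ω).toReal)
    (X : (N : ℕ) → Fin N → EuclideanSpace ℝ (Fin d))
    (hX : ∀ N i, X N i ∈ Ω)
    (hunif : ∀ f : EuclideanSpace ℝ (Fin d) → ℝ, ContinuousOn f Ω →
      Tendsto (fun N : ℕ => ((volume Ω).toReal / N) * ∑ i : Fin N, f (X N i))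
        atTop (nhds (∫ x in Ω, f x)))
    (κA κB κC : EuclideanSpace ℝ (Fin d) → EuclideanSpace ℝ (Fin d) → ℝ)
    (hκA : ContinuousOn
      (fun p : EuclideanSpace ℝ (Fin d) × EuclideanSpace ℝ (Fin d) => κA p.1 p.2) (Ω ×ˢ Ω))
    (hκB : ContinuousOn
      (fun p : EuclideanSpace ℝ (Fin d) × EuclideanSpace ℝ (Fin d) => κB p.1 p.2) (Ω ×ˢ Ω))
    (hκC : ∀ x y, κC x y = ∫ z in Ω, κA x z * κB z y) :
    TendstoUniformlyOn
      (fun (N : ℕ) (p : EuclideanSpace ℝ (Fin d) × EuclideanSpace ℝ (Fin d)) =>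
        ((volume Ω).toReal / N) * ∑ k : Fin N, κA p.1 (X N k) * κB (X N k) p.2)
      (fun p => κC p.1 p.2) atTop (Ω ×ˢ Ω) := by
  set V : ℝ := (volume Ω).toReal with hV
  set K : Set _ := Ω ×ˢ Ω with hK
  have hKc : IsCompact K := hΩc.prod hΩc
  -- bound M on κA and κB
  obtain ⟨MA, hMA⟩ := hKc.exists_bound_of_continuousOn hκA
  obtain ⟨MB, hMB⟩ := hKc.exists_bound_of_continuousOn hκB
  set M : ℝ := max (max MA MB) 1 with hM
  have hMpos : (0:ℝ) < M := lt_of_lt_of_le one_pos (le_max_right _ _)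
  have hA_le : ∀ x ∈ Ω, ∀ z ∈ Ω, |κA x z| ≤ M := by
    intro x hx z hz
    have := hMA (x, z) ⟨hx, hz⟩
    rw [Real.norm_eq_abs] at this
    exact le_trans this (le_trans (le_max_left MA MB) (le_max_left _ _))
  have hB_le : ∀ x ∈ Ω, ∀ z ∈ Ω, |κB x z| ≤ M := by
    intro x hx z hz
    have := hMB (x, z) ⟨hx, hz⟩
    rw [Real.norm_eq_abs] at this
    exact le_trans this (le_trans (le_max_right MA MB) (le_max_left _ _))
  -- continuity of slices
  have hsliceA : ∀ x ∈ Ω, ContinuousOn (fun z => κA x z) Ω := by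
    intro x hx
    exact hκA.comp (Continuous.continuousOn (continuous_const.prodMk continuous_id))
      (fun z hz => ⟨hx, hz⟩)
  have hsliceB : ∀ y ∈ Ω, ContinuousOn (fun z => κB z y) Ω := by
    intro y hy
    exact hκB.comp (Continuous.continuousOn (continuous_id.prodMk continuous_const))
      (fun z hz => ⟨hz, hy⟩)
  have hcont : ∀ x ∈ Ω, ∀ y ∈ Ω, ContinuousOn (fun z => κA x z * κB z y) Ω :=
    fun x hx y hy => (hsliceA x hx).mul (hsliceB y hy)
  have hΩmeas : MeasurableSet Ω := hΩc.isClosed.measurableSet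
  have hΩfin : volume Ω < ⊤ := hΩc.measure_lt_top
  rw [Metric.tendstoUniformlyOn_iff]
  intro ε hε
  -- modulus of continuity
  set η : ℝ := ε / 3 / (2 * M * V + 1) with hη
  have hCpos : (0:ℝ) < 2 * M * V + 1 := by positivity
  have hηpos : 0 < η := by positivity
  have hkey : 2 * M * η * V < ε / 3 := by
    have h1 : 2 * M * V / (2 * M * V + 1) < 1 := by
      rw [div_lt_one hCpos]; linarith
    calc 2 * M * η * V = (ε / 3) * (2 * M * V / (2 * M * V + 1)) := by rw [hη]; ring
      _ < (ε / 3) * 1 := by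
          apply mul_lt_mul_of_pos_left h1 (by positivity)
      _ = ε / 3 := mul_one _
  obtain ⟨δA, hδApos, hδA⟩ := Metric.uniformContinuousOn_iff.1
    (hKc.uniformContinuousOn_of_continuous hκA) η hηpos
  obtain ⟨δB, hδBpos, hδB⟩ := Metric.uniformContinuousOn_iff.1
    (hKc.uniformContinuousOn_of_continuous hκB) η hηpos
  set δ : ℝ := min δA δB with hδ
  have hδpos : 0 < δ := lt_min hδApos hδBpos
  -- key estimate: |κA x z * κB z y - κA x' z * κB z y'| ≤ 2Mη for nearby p, p'
  have hpt : ∀ p ∈ K, ∀ q ∈ K, dist p q < δ → ∀ z ∈ Ω,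
      |κA p.1 z * κB z p.2 - κA q.1 z * κB z q.2| ≤ 2 * M * η := by
    rintro ⟨x, y⟩ ⟨hx, hy⟩ ⟨x', y'⟩ ⟨hx', hy'⟩ hpq z hz
    have hd1 : dist (x, z) (x', z) < δA := by
      rw [Prod.dist_eq] at hpq ⊢
      simp only [dist_self]
      exact lt_of_le_of_lt (max_le_max le_rfl dist_nonneg
        : max (dist x x') 0 ≤ max (dist x x') (dist y y'))
        (lt_of_lt_of_le hpq (min_le_left _ _))
    have hd2 : dist (z, y) (z, y') < δB := by
      rw [Prod.dist_eq] at hpq ⊢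
      simp only [dist_self]
      exact lt_of_le_of_lt (max_le_max dist_nonneg le_rfl
        : max 0 (dist y y') ≤ max (dist x x') (dist y y'))
        (lt_of_lt_of_le hpq (min_le_right _ _))
    have h1 : |κA x z - κA x' z| ≤ η := by
      have := hδA (x, z) ⟨hx, hz⟩ (x', z) ⟨hx', hz⟩ hd1
      rw [Real.dist_eq] at this; exact this.le
    have h2 : |κB z y - κB z y'| ≤ η := by
      have := hδB (z, y) ⟨hz, hy⟩ (z, y') ⟨hz, hy'⟩ hd2
      rw [Real.dist_eq] at this; exact this.le
    exact mul_sub_mul_bound hMpos.le (hA_le x hx z hz) (hB_le z hz y hy)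
      (hA_le x' hx' z hz) (hB_le z hz y' hy') h1 h2
  -- discrete sums: equicontinuity
  have hFdiff : ∀ (N : ℕ) (p) (_ : p ∈ K) (q) (_ : q ∈ K), dist p q < δ →
      |(V / N) * ∑ k : Fin N, κA p.1 (X N k) * κB (X N k) p.2
        - (V / N) * ∑ k : Fin N, κA q.1 (X N k) * κB (X N k) q.2| ≤ 2 * M * η * V := by
    intro N p hp q hq hpq
    rw [← mul_sub, ← Finset.sum_sub_distrib, abs_mul]
    have hVN : |V / (N:ℝ)| = V / N := abs_of_nonneg (by positivity)
    rw [hVN]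
    calc V / N * |∑ k : Fin N, (κA p.1 (X N k) * κB (X N k) p.2
          - κA q.1 (X N k) * κB (X N k) q.2)|
        ≤ V / N * ∑ k : Fin N, |κA p.1 (X N k) * κB (X N k) p.2
          - κA q.1 (X N k) * κB (X N k) q.2| :=
          mul_le_mul_of_nonneg_left (Finset.abs_sum_le_sum_abs _ _) (by positivity)
      _ ≤ V / N * ∑ _k : Fin N, (2 * M * η) :=
          mul_le_mul_of_nonneg_left
            (Finset.sum_le_sum (fun k _ => hpt p hp q hq hpq (X N k) (hX N k)))
            (by positivity)
      _ = (2 * M * η) * (V * ((N:ℝ) / N)) := by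
          simp [Finset.sum_const]; ring
      _ ≤ 2 * M * η * (V * 1) := by
          have hNN : ((N:ℝ) / N) ≤ 1 := by
            rcases Nat.eq_zero_or_pos N with h | h
            · simp [h]
            · rw [div_self (by exact_mod_cast h.ne' : ((N:ℝ)) ≠ 0)]
          exact mul_le_mul_of_nonneg_left
            (mul_le_mul_of_nonneg_left hNN hΩpos.le) (by positivity)
      _ = 2 * M * η * V := by ring
  -- limit function: continuity estimate
  have hGdiff : ∀ (p) (_ : p ∈ K) (q) (_ : q ∈ K), dist p q < δ →
      |κC p.1 p.2 - κC q.1 q.2| ≤ 2 * M * η * V := by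
    rintro ⟨x, y⟩ hp ⟨x', y'⟩ hq hpq
    obtain ⟨hx, hy⟩ := hp
    obtain ⟨hx', hy'⟩ := hq
    have hint1 : IntegrableOn (fun z => κA x z * κB z y) Ω volume :=
      (hcont x hx y hy).integrableOn_compact hΩc
    have hint2 : IntegrableOn (fun z => κA x' z * κB z y') Ω volume :=
      (hcont x' hx' y' hy').integrableOn_compact hΩc
    rw [hκC, hκC, ← integral_sub hint1 hint2]
    have := norm_setIntegral_le_of_norm_le_const_ae' (f := fun z =>
        κA x z * κB z y - κA x' z * κB z y') (μ := volume) hΩfin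
      (Eventually.of_forall (fun z hz => by
        rw [Real.norm_eq_abs]
        exact hpt (x, y) ⟨hx, hy⟩ (x', y') ⟨hx', hy'⟩ hpq z hz))
    rw [Real.norm_eq_abs] at this
    exact this
  -- finite δ-net of K
  obtain ⟨T, hTK, hTfin, hTcov⟩ := hKc.finite_cover_balls hδpos
  -- pointwise convergence at each net point
  have hptconv : ∀ t ∈ T, Tendsto
      (fun N : ℕ => (V / N) * ∑ k : Fin N, κA t.1 (X N k) * κB (X N k) t.2)
      atTop (nhds (κC t.1 t.2)) := by
    intro t ht
    obtain ⟨ht1, ht2⟩ := hTK ht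
    have := hunif (fun z => κA t.1 z * κB z t.2) (hcont t.1 ht1 t.2 ht2)
    rwa [← hκC] at this
  have hev : ∀ᶠ N : ℕ in atTop, ∀ t ∈ T,
      |κC t.1 t.2 - (V / N) * ∑ k : Fin N, κA t.1 (X N k) * κB (X N k) t.2| < ε / 3 := by
    rw [eventually_all_finite hTfin]
    intro t ht
    have h := Metric.tendsto_nhds.1 (hptconv t ht) (ε / 3) (by positivity)
    filter_upwards [h] with N hN
    rw [Real.dist_eq, abs_sub_comm] at hN
    exact hN
  filter_upwards [hev] with N hN p hp
  -- find net point near p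
  obtain ⟨t, ht, hpt'⟩ := Set.mem_iUnion₂.1 (hTcov hp)
  rw [Metric.mem_ball] at hpt'
  have htK : t ∈ K := hTK ht
  rw [Real.dist_eq]
  calc |κC p.1 p.2 - (V / N) * ∑ k : Fin N, κA p.1 (X N k) * κB (X N k) p.2|
      ≤ |κC p.1 p.2 - κC t.1 t.2|
        + |κC t.1 t.2 - (V / N) * ∑ k : Fin N, κA t.1 (X N k) * κB (X N k) t.2|
        + |(V / N) * ∑ k : Fin N, κA t.1 (X N k) * κB (X N k) t.2
          - (V / N) * ∑ k : Fin N, κA p.1 (X N k) * κB (X N k) p.2| := by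
        exact (abs_sub_le (κC p.1 p.2)
            ((V / N) * ∑ k : Fin N, κA t.1 (X N k) * κB (X N k) t.2)
            ((V / N) * ∑ k : Fin N, κA p.1 (X N k) * κB (X N k) p.2)).trans
          (add_le_add_left (abs_sub_le (κC p.1 p.2) (κC t.1 t.2)
            ((V / N) * ∑ k : Fin N, κA t.1 (X N k) * κB (X N k) t.2)) _)
    _ < ε / 3 + ε / 3 + ε / 3 := by
        have h1 := hGdiff p hp t htK hpt'
        have h2 := hN t ht
        have h3 := hFdiff N t htK p hp (by rwa [dist_comm])
        have h4 := hkey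
        gcongr <;> linarith
    _ = ε := by ring
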